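/- Let q = p^t be a power of a prime p, m ≥ 1, and let B = (β_1,…,β_m) be a basis of F_{q^m} over F_q with Gram matrix M = (tr_{q^m/q}(β_i β_j))_{1≤i,j≤m}. Define φ_B : F_{q^m}^{2n} → F_q^{2nm} by φ_B((u|v)) = ((c_B(u_1),…,c_B(u_n)) | (M c_B(v_1),…,M c_B(v_n))). Then φ_B preserves the trace-symplectic form: for all x = (u|v) and y = (u^*|v^*) in F_{q^m}^{2n}, tr_{q^m/p}(v·u^* − v^*·u) = tr_{q/p}(b·a^* − b^*·a), where φ_B(x) = (a|b) and φ_B(y) = (a^*|b^*). Consequently, for every F_p-additive (i.e. F_p-linear) code C ⊆ F_{q^m}^{2n} with C ⊆ C^{⊥_s}, one has φ_B(C) ⊆ [φ_B(C)]^{⊥_s}. -/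

import Mathlib

open Finset

/-- Trace-symplectic dual of an additive (`R`-linear) code `C ⊆ F^n × F^n`. -/
def sympDual (R : Type*) {F : Type*} [CommRing R] [CommRing F] [Algebra R F]
    {ι : Type*} [Fintype ι]
    (C : Submodule R ((ι → F) × (ι → F))) : Submodule R ((ι → F) × (ι → F)) where
  carrier := {y | ∀ x ∈ C, Algebra.trace R F (∑ i, (x.2 i * y.1 i - y.2 i * x.1 i)) = 0}
  zero_mem' := by intro x hx; simp
  add_mem' := by
    intro a b ha hb x hx
    simp only [Set.mem_setOf_eq] at *
    have h : (∑ i, (x.2 i * (a + b).1 i - (a + b).2 i * x.1 i))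
        = (∑ i, (x.2 i * a.1 i - a.2 i * x.1 i)) + ∑ i, (x.2 i * b.1 i - b.2 i * x.1 i) := by
      rw [← Finset.sum_add_distrib]
      refine Finset.sum_congr rfl fun i _ => ?_
      simp only [Prod.fst_add, Prod.snd_add, Pi.add_apply]
      ring
    rw [h, map_add, ha x hx, hb x hx, add_zero]
  smul_mem' := by
    intro c a ha x hx
    simp only [Set.mem_setOf_eq] at *
    have h : (∑ i, (x.2 i * (c • a).1 i - (c • a).2 i * x.1 i))
        = c • ∑ i, (x.2 i * a.1 i - a.2 i * x.1 i) := by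
      rw [Finset.smul_sum]
      refine Finset.sum_congr rfl fun i _ => ?_
      simp only [Prod.smul_fst, Prod.smul_snd, Pi.smul_apply]
      simp only [Algebra.smul_def, mul_sub]
      ring
    rw [h, map_smul, ha x hx, smul_zero]

/-- The expansion map `φ_B` of the paper: coordinates with respect to `B` on the
`X`-part, Gram-matrix-twisted coordinates on the `Z`-part;  it is `F_p`-linear. -/
noncomputable def phiB (p : ℕ) {K L : Type*} [Field K] [Field L] [Algebra K L]
    [Algebra (ZMod p) K] [Algebra (ZMod p) L] [IsScalarTower (ZMod p) K L]
    {m : ℕ} (B : Module.Basis (Fin m) K L) (M : Matrix (Fin m) (Fin m) K) (n : ℕ) :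
    ((Fin n → L) × (Fin n → L)) →ₗ[ZMod p] ((Fin n × Fin m → K) × (Fin n × Fin m → K)) :=
  AddMonoidHom.toZModLinearMap p
    { toFun := fun x => (fun ij => B.repr (x.1 ij.1) ij.2,
        fun ij => ∑ k, M ij.2 k * B.repr (x.2 ij.1) k)
      map_zero' := by
        refine Prod.ext ?_ ?_ <;> funext ij <;> simp
      map_add' := fun x y => by
        refine Prod.ext ?_ ?_ <;> funext ij <;>
          simp [Finset.sum_add_distrib, mul_add] }

/-- `φ_B` preserves the trace-symplectic form, and consequently maps
self-orthogonal additive codes to self-orthogonal additive codes. -/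
theorem phiB_preserves_symplectic (p : ℕ) [Fact p.Prime]
    {K L : Type*} [Field K] [Field L] [Algebra K L]
    [Algebra (ZMod p) K] [Algebra (ZMod p) L] [IsScalarTower (ZMod p) K L]
    [FiniteDimensional (ZMod p) K] [FiniteDimensional K L]
    {m : ℕ} (B : Module.Basis (Fin m) K L) (M : Matrix (Fin m) (Fin m) K)
    (hM : ∀ i j, M i j = Algebra.trace K L (B i * B j)) (n : ℕ) :
    (∀ u v u' v' : Fin n → L,
      Algebra.trace (ZMod p) L ((∑ i, v i * u' i) - ∑ i, v' i * u i)
        = Algebra.trace (ZMod p) K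
            ((∑ ij : Fin n × Fin m,
                (phiB p B M n (u, v)).2 ij * (phiB p B M n (u', v')).1 ij)
              - ∑ ij : Fin n × Fin m,
                (phiB p B M n (u', v')).2 ij * (phiB p B M n (u, v)).1 ij)) ∧
    (∀ C : Submodule (ZMod p) ((Fin n → L) × (Fin n → L)),
      C ≤ sympDual (ZMod p) C →
      Submodule.map (phiB p B M n) C ≤ sympDual (ZMod p) (Submodule.map (phiB p B M n) C)) := by
  classical
  -- key pointwise identity
  have key : ∀ a b : L, Algebra.trace K L (a * b)
      = ∑ j, (∑ k, M j k * B.repr a k) * B.repr b j := by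
    intro a b
    conv_lhs => rw [← B.sum_repr a, ← B.sum_repr b]
    rw [Finset.sum_mul_sum, map_sum]
    simp_rw [map_sum, smul_mul_smul_comm, map_smul, smul_eq_mul, Finset.sum_mul]
    rw [Finset.sum_comm]
    refine Finset.sum_congr rfl fun j _ => Finset.sum_congr rfl fun k _ => ?_
    rw [hM j k, mul_comm (B j) (B k)]
    ring
  have main : ∀ u v u' v' : Fin n → L,
      Algebra.trace (ZMod p) L ((∑ i, v i * u' i) - ∑ i, v' i * u i)
        = Algebra.trace (ZMod p) K
            ((∑ ij : Fin n × Fin m,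
                (phiB p B M n (u, v)).2 ij * (phiB p B M n (u', v')).1 ij)
              - ∑ ij : Fin n × Fin m,
                (phiB p B M n (u', v')).2 ij * (phiB p B M n (u, v)).1 ij) := by
    intro u v u' v'
    rw [← Algebra.trace_trace (S := K)]
    congr 1
    rw [map_sub, map_sum, map_sum]
    congr 1
    · rw [Fintype.sum_prod_type]
      exact Finset.sum_congr rfl fun i _ => key (v i) (u' i)
    · rw [Fintype.sum_prod_type]
      exact Finset.sum_congr rfl fun i _ => key (v' i) (u i)
  refine ⟨main, ?_⟩
  intro C hC y hy x hx
  obtain ⟨a, ha, rfl⟩ := hx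
  obtain ⟨b, hb, rfl⟩ := hy
  have h1 := hC hb a ha
  have h2 : (∑ i, ((phiB p B M n a).2 i * (phiB p B M n b).1 i
        - (phiB p B M n b).2 i * (phiB p B M n a).1 i))
      = (∑ i, (phiB p B M n a).2 i * (phiB p B M n b).1 i)
        - ∑ i, (phiB p B M n b).2 i * (phiB p B M n a).1 i :=
    Finset.sum_sub_distrib _ _
  have h3 : (∑ i, (a.2 i * b.1 i - b.2 i * a.1 i))
      = (∑ i, a.2 i * b.1 i) - ∑ i, b.2 i * a.1 i := Finset.sum_sub_distrib _ _
  rw [h2, ← main a.1 a.2 b.1 b.2, ← h3]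
  exact h1
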